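/- In the iterative decomposition procedure for a row-stochastic matrix P, if P^m ≠ 0 then the number of zero entries of P^{m+1} is strictly greater than the number of zero entries of P^m. Consequently the procedure terminates: there exists n* ≤ |I|·|J| with P^{n*} = 0. -/
import Mathlib


/-- The maximum of row `i` of the matrix `P`. -/
noncomputable def rowMax {I J : Type*} [Fintype J] [Nonempty J]
    (P : I → J → ℝ) (i : I) : ℝ :=
  Finset.univ.sup' Finset.univ_nonempty (P i)

open Classical in
/-- The first column index achieving the maximum of row `i` of `P`. -/
noncomputable def argmaxRow {I J : Type*} [Fintype J] [Nonempty J] [LinearOrder J]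
    (P : I → J → ℝ) (i : I) : J :=
  (Finset.univ.filter fun j => P i j = rowMax P i).min' (by
    obtain ⟨b, _, hb⟩ := Finset.exists_mem_eq_sup' (Finset.univ_nonempty) (P i)
    exact ⟨b, Finset.mem_filter.mpr ⟨Finset.mem_univ b, hb.symm⟩⟩)

/-- The greedy coefficient `α = min_i max_j P i j`. -/
noncomputable def alphaCoef {I J : Type*} [Fintype I] [Nonempty I] [Fintype J] [Nonempty J]
    (P : I → J → ℝ) : ℝ :=
  Finset.univ.inf' Finset.univ_nonempty (rowMax P)

/-- The 0-1 matrix with a `1` in row `i` exactly at the first column achieving the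
row maximum of `P`. -/
noncomputable def Lmat {I J : Type*} [Fintype J] [Nonempty J] [LinearOrder J]
    (P : I → J → ℝ) : I → J → ℝ :=
  fun i j => if j = argmaxRow P i then 1 else 0

/-- The iterative greedy decomposition procedure:
`P⁰ = P`, `P^{m+1} = P^m - α(P^m) • L(P^m)`. -/
noncomputable def iterP {I J : Type*} [Fintype I] [Nonempty I]
    [Fintype J] [Nonempty J] [LinearOrder J]
    (P : I → J → ℝ) : ℕ → I → J → ℝ
  | 0 => P
  | m + 1 => fun i j => iterP P m i j - alphaCoef (iterP P m) * Lmat (iterP P m) i j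

set_option linter.unusedSectionVars false

section aux
variable {I J : Type*} [Fintype J] [Nonempty J] [LinearOrder J]

lemma le_rowMax (P : I → J → ℝ) (i : I) (j : J) : P i j ≤ rowMax P i :=
  Finset.le_sup' _ (Finset.mem_univ j)

open Classical in
lemma argmaxRow_spec (P : I → J → ℝ) (i : I) : P i (argmaxRow P i) = rowMax P i := by
  have h := Finset.min'_mem (Finset.univ.filter fun j => P i j = rowMax P i)
    (by
      obtain ⟨b, _, hb⟩ := Finset.exists_mem_eq_sup' (Finset.univ_nonempty) (P i)
      exact ⟨b, Finset.mem_filter.mpr ⟨Finset.mem_univ b, hb.symm⟩⟩)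
  exact (Finset.mem_filter.mp h).2

variable [Fintype I] [Nonempty I]

lemma alphaCoef_le (P : I → J → ℝ) (i : I) : alphaCoef P ≤ rowMax P i :=
  Finset.inf'_le _ (Finset.mem_univ i)

lemma alphaCoef_nonneg (P : I → J → ℝ) (h0 : ∀ i j, 0 ≤ P i j) : 0 ≤ alphaCoef P := by
  apply Finset.le_inf'
  intro i _
  exact le_trans (h0 i (Classical.arbitrary J)) (le_rowMax P i _)

lemma sum_Lmat (P : I → J → ℝ) (i : I) : ∑ j, Lmat P i j = 1 := by
  simp [Lmat]

lemma step_zero_preserved (Q : I → J → ℝ) (hQ0 : ∀ i j, 0 ≤ Q i j) {i : I} {j : J}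
    (h : Q i j = 0) : Q i j - alphaCoef Q * Lmat Q i j = 0 := by
  by_cases hj : j = argmaxRow Q i
  · have h1 : rowMax Q i = 0 := by rw [← argmaxRow_spec Q i, ← hj, h]
    have h2 : alphaCoef Q ≤ 0 := h1 ▸ alphaCoef_le Q i
    have h3 := alphaCoef_nonneg Q hQ0
    simp [Lmat, hj, le_antisymm h2 h3]; rw [← hj]; exact h
  · simp [Lmat, hj, h]

lemma step_new_zero (Q : I → J → ℝ) (hQ0 : ∀ i j, 0 ≤ Q i j)
    (hs : ∀ i i', ∑ j, Q i j = ∑ j, Q i' j)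
    (hne : ¬ ∀ i j, Q i j = 0) :
    ∃ i j, Q i j ≠ 0 ∧ Q i j - alphaCoef Q * Lmat Q i j = 0 := by
  push_neg at hne
  obtain ⟨i₁, j₁, hij⟩ := hne
  have hpos : 0 < Q i₁ j₁ := lt_of_le_of_ne (hQ0 _ _) (Ne.symm hij)
  have hsumpos : 0 < ∑ j, Q i₁ j :=
    lt_of_lt_of_le hpos (Finset.single_le_sum (fun j _ => hQ0 i₁ j) (Finset.mem_univ j₁))
  have hrowpos : ∀ i, 0 < rowMax Q i := by
    intro i
    have h1 : 0 < ∑ j, Q i j := hs i i₁ ▸ hsumpos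
    by_contra hle
    push_neg at hle
    have h2 : ∑ j, Q i j ≤ 0 :=
      Finset.sum_nonpos fun j _ => le_trans (le_rowMax Q i j) hle
    linarith
  obtain ⟨i₀, _, hi₀⟩ := Finset.exists_mem_eq_inf'
    (Finset.univ_nonempty : (Finset.univ : Finset I).Nonempty) (rowMax Q)
  refine ⟨i₀, argmaxRow Q i₀, ?_, ?_⟩
  · rw [argmaxRow_spec Q i₀]; exact ne_of_gt (hrowpos i₀)
  · rw [argmaxRow_spec Q i₀]
    simp [Lmat, alphaCoef, hi₀]

lemma iterP_inv (P : I → J → ℝ) (h0 : ∀ i j, 0 ≤ P i j) (hrow : ∀ i, ∑ j, P i j = 1)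
    (m : ℕ) : (∀ i j, 0 ≤ iterP P m i j) ∧
      (∀ i i', ∑ j, iterP P m i j = ∑ j, iterP P m i' j) := by
  induction m with
  | zero => exact ⟨h0, fun i i' => by simp [iterP, hrow]⟩
  | succ m ih =>
    obtain ⟨hn, hs⟩ := ih
    refine ⟨?_, ?_⟩
    · intro i j
      by_cases hj : j = argmaxRow (iterP P m) i
      · have hle : alphaCoef (iterP P m) ≤ iterP P m i j := by
          rw [hj, argmaxRow_spec (iterP P m) i]; exact alphaCoef_le _ i
        simp only [iterP, Lmat, if_pos hj, mul_one]
        linarith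
      · simp only [iterP, Lmat, if_neg hj, mul_zero, sub_zero]
        exact hn i j
    · intro i i'
      have key : ∀ i : I, ∑ j, iterP P (m+1) i j
          = (∑ j, iterP P m i j) - alphaCoef (iterP P m) := by
        intro i
        simp only [iterP]
        rw [Finset.sum_sub_distrib, ← Finset.mul_sum, sum_Lmat, mul_one]
      rw [key, key, hs i i']

end aux

open Classical in
/-- In the iterative decomposition procedure, if `P^m ≠ 0` then `P^{m+1}` has strictly
more zero entries than `P^m`; consequently the procedure terminates: there is
`n* ≤ |I|·|J|` with `P^{n*} = 0`. -/
theorem iterP_zeros_strict_mono_and_terminates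
    {I J : Type*} [Fintype I] [Nonempty I] [Fintype J] [Nonempty J] [LinearOrder J]
    (P : I → J → ℝ)
    (h0 : ∀ i j, 0 ≤ P i j) (h1 : ∀ i j, P i j ≤ 1)
    (hrow : ∀ i, ∑ j, P i j = 1) :
    (∀ m : ℕ, ¬ (∀ i j, iterP P m i j = 0) →
        (Finset.univ.filter fun p : I × J => iterP P m p.1 p.2 = 0).card <
        (Finset.univ.filter fun p : I × J => iterP P (m + 1) p.1 p.2 = 0).card) ∧
    (∃ n : ℕ, n ≤ Fintype.card I * Fintype.card J ∧ ∀ i j, iterP P n i j = 0) := by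
  have hstrict : ∀ m : ℕ, ¬ (∀ i j, iterP P m i j = 0) →
      (Finset.univ.filter fun p : I × J => iterP P m p.1 p.2 = 0).card <
      (Finset.univ.filter fun p : I × J => iterP P (m + 1) p.1 p.2 = 0).card := by
    intro m hne
    obtain ⟨hn, hs⟩ := iterP_inv P h0 hrow m
    apply Finset.card_lt_card
    constructor
    · intro p hp
      simp only [Finset.mem_filter, Finset.mem_univ, true_and] at hp ⊢
      have := step_zero_preserved (iterP P m) hn hp
      simpa [iterP] using this
    · intro hsub
      obtain ⟨i, j, hne', hz⟩ := step_new_zero (iterP P m) hn hs hne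
      have hmem : (i, j) ∈ (Finset.univ.filter fun p : I × J => iterP P (m+1) p.1 p.2 = 0) := by
        simp only [Finset.mem_filter, Finset.mem_univ, true_and]
        simpa [iterP] using hz
      have := hsub hmem
      simp only [Finset.mem_filter, Finset.mem_univ, true_and] at this
      exact hne' this
  refine ⟨hstrict, ?_⟩
  by_contra hcon
  push_neg at hcon
  set N := Fintype.card I * Fintype.card J with hN
  set f : ℕ → ℕ := fun m => (Finset.univ.filter fun p : I × J => iterP P m p.1 p.2 = 0).card with hf
  have hgrow : ∀ m, m ≤ N + 1 → m ≤ f m := by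
    intro m
    induction m with
    | zero => intro _; exact Nat.zero_le _
    | succ m ih =>
      intro hm
      have h1 : m ≤ N := by omega
      have hne : ¬ (∀ i j, iterP P m i j = 0) := by
        intro hall
        obtain ⟨i, j, hij⟩ := hcon m h1
        exact hij (hall i j)
      have := hstrict m hne
      have := ih (by omega)
      simp only [hf] at *
      omega
  have hb : f (N + 1) ≤ N := by
    calc f (N + 1) ≤ (Finset.univ : Finset (I × J)).card := Finset.card_filter_le _ _
    _ = N := by rw [Finset.card_univ, Fintype.card_prod]
  have := hgrow (N + 1) le_rfl
  omega
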